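/- Let G be an infinite abelian group with no elements of order 2 (that is, x + x = 0 implies x = 0). Then there exists a colouring c : G → ℕ such that for no a, b ∈ G with b ≠ 0 is the set {a, a + b, a + 2b} monochromatic for c; in other words, no nontrivial 3-term arithmetic progression in G is monochromatic. -/

import Mathlib

section Good

variable {M N X Y : Type*}

/-- A colouring with no monochromatic nontrivial 3-AP. -/
def IsGoodColoring [AddCommGroup M] (c : M → X) : Prop :=
  ∀ a b : M, b ≠ 0 → c (a + b) = c a → c (a + 2 • b) = c a → False

theorem IsGoodColoring.comp_addMonoidHom [AddCommGroup M] [AddCommGroup N] {c : N → X}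
    (hc : IsGoodColoring c) (f : M →+ N) (hf : Function.Injective f) :
    IsGoodColoring fun x => c (f x) := by
  intro a b hb h1 h2
  have hfb : f b ≠ 0 := fun h => hb (hf (h.trans (map_zero f).symm))
  refine hc (f a) (f b) hfb ?_ ?_
  · rw [← map_add]; exact h1
  · have h3 : f (a + 2 • b) = f a + 2 • f b := by rw [map_add, map_nsmul]
    rw [← h3]; exact h2

theorem IsGoodColoring.comp_inj [AddCommGroup M] {c : M → X} (hc : IsGoodColoring c)
    {g : X → Y} (hg : Function.Injective g) : IsGoodColoring fun x => g (c x) :=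
  fun a b hb h1 h2 => hc a b hb (hg h1) (hg h2)

theorem IsGoodColoring.to_nat [AddCommGroup M] [Countable X] {c : M → X}
    (hc : IsGoodColoring c) : ∃ c' : M → ℕ, IsGoodColoring c' := by
  obtain ⟨g, hg⟩ := Countable.exists_injective_nat X
  exact ⟨fun x => g (c x), hc.comp_inj hg⟩

end Good

section Ceder

variable {I A : Type*} [LinearOrder I] [AddCommGroup A]

noncomputable def cederList (e : A → ℕ) (x : I →₀ A) : List ℕ :=
  if h : x.support = ∅ then []
  else
    have hne : x.support.Nonempty := Finset.nonempty_iff_ne_empty.2 h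
    cederList e (x.erase (x.support.max' hne)) ++ [e (x (x.support.max' hne))]
termination_by x.support.card
decreasing_by
  simp only [Finsupp.support_erase]
  exact Finset.card_erase_lt_of_mem (Finset.max'_mem _ _)

theorem cederList_of_nonempty (e : A → ℕ) (x : I →₀ A) (hx : x.support.Nonempty) :
    cederList e x =
      cederList e (x.erase (x.support.max' hx)) ++ [e (x (x.support.max' hx))] := by
  rw [cederList]
  rw [dif_neg (Finset.nonempty_iff_ne_empty.1 hx)]

theorem cederList_ne_nil (e : A → ℕ) (x : I →₀ A) (hx : x ≠ 0) :
    cederList e x ≠ [] := by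
  have hs : x.support.Nonempty := Finsupp.support_nonempty_iff.2 hx
  rw [cederList_of_nonempty e x hs]
  simp

end Ceder

section CederKey

variable {I A : Type*} [LinearOrder I] [AddCommGroup A]

theorem cederList_key (e : A → ℕ) (he : Function.Injective e)
    (h2 : ∀ u : A, u + u = 0 → u = 0) :
    ∀ N : ℕ, ∀ x y z : I →₀ A, (x.support ∪ y.support ∪ z.support).card ≤ N →
      x + z = y + y → cederList e x = cederList e y → cederList e y = cederList e z →
      x = y ∧ y = z := by
  intro N
  induction N with
  | zero =>
    intro x y z hcard heq _ _
    have hU : (x.support ∪ y.support ∪ z.support) = ∅ :=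
      Finset.card_eq_zero.1 (Nat.le_zero.1 hcard)
    rw [Finset.union_eq_empty, Finset.union_eq_empty] at hU
    obtain ⟨⟨hx, hy⟩, hz⟩ := hU
    rw [Finsupp.support_eq_empty] at hx hy hz
    exact ⟨hx.trans hy.symm, hy.trans hz.symm⟩
  | succ N ih =>
    intro x y z hcard heq hxy hyz
    by_cases hU : (x.support ∪ y.support ∪ z.support) = ∅
    · rw [Finset.union_eq_empty, Finset.union_eq_empty] at hU
      obtain ⟨⟨hx, hy⟩, hz⟩ := hU
      rw [Finsupp.support_eq_empty] at hx hy hz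
      exact ⟨hx.trans hy.symm, hy.trans hz.symm⟩
    · set U := x.support ∪ y.support ∪ z.support with hUdef
      have hUne : U.Nonempty := Finset.nonempty_iff_ne_empty.2 hU
      set m := U.max' hUne with hm
      have hmU : m ∈ U := Finset.max'_mem _ _
      have hle : ∀ i ∈ U, i ≤ m := fun i hi => Finset.le_max' _ i hi
      have hvals : x m + z m = y m + y m := by
        have h := DFunLike.congr_fun heq m
        simpa [Finsupp.add_apply] using h
      -- unfolding helper
      have hunf : ∀ w : I →₀ A, m ∈ w.support → w.support ⊆ U →
          cederList e w = cederList e (w.erase m) ++ [e (w m)] := by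
        intro w hmw hsub
        have hne : w.support.Nonempty := ⟨m, hmw⟩
        have hmax : w.support.max' hne = m :=
          le_antisymm (Finset.max'_le _ _ _ fun i hi => hle i (hsub hi))
            (Finset.le_max' _ _ hmw)
        rw [cederList_of_nonempty e w hne, hmax]
      have hsubx : x.support ⊆ U := by
        intro i hi; exact Finset.mem_union_left _ (Finset.mem_union_left _ hi)
      have hsuby : y.support ⊆ U := by
        intro i hi; exact Finset.mem_union_left _ (Finset.mem_union_right _ hi)
      have hsubz : z.support ⊆ U := fun i hi => Finset.mem_union_right _ hi
      by_cases hx : m ∈ x.support <;> by_cases hy : m ∈ y.support <;>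
        by_cases hz : m ∈ z.support
      -- case TTT
      · have hcx := hunf x hx hsubx
        have hcy := hunf y hy hsuby
        have hcz := hunf z hz hsubz
        rw [hcx, hcy] at hxy
        rw [hcy, hcz] at hyz
        obtain ⟨hxy', hv1⟩ := List.append_inj' hxy rfl
        obtain ⟨hyz', hv2⟩ := List.append_inj' hyz rfl
        have hv1' : x m = y m := he (List.singleton_injective hv1)
        have hv2' : y m = z m := he (List.singleton_injective hv2)
        have heq' : x.erase m + z.erase m = y.erase m + y.erase m := by
          ext i
          rcases eq_or_ne i m with rfl | hi
          · simp [Finsupp.erase_same]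
          · have h := DFunLike.congr_fun heq i
            simp only [Finsupp.add_apply, Finsupp.erase_ne hi]
            simpa [Finsupp.add_apply] using h
        have hcard' : ((x.erase m).support ∪ (y.erase m).support ∪
            (z.erase m).support).card ≤ N := by
          have hsub : (x.erase m).support ∪ (y.erase m).support ∪
              (z.erase m).support ⊆ U.erase m := by
            simp only [Finsupp.support_erase]
            rw [← Finset.erase_union_distrib, ← Finset.erase_union_distrib]
          have h1 : (U.erase m).card < U.card := Finset.card_erase_lt_of_mem hmU
          have h2' := Finset.card_le_card hsub
          omega
        obtain ⟨e1, e2⟩ := ih (x.erase m) (y.erase m) (z.erase m) hcard' heq' hxy' hyz'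
        constructor
        · ext i
          rcases eq_or_ne i m with rfl | hi
          · exact hv1'
          · have := DFunLike.congr_fun e1 i
            simpa [Finsupp.erase_ne hi] using this
        · ext i
          rcases eq_or_ne i m with rfl | hi
          · exact hv2'
          · have := DFunLike.congr_fun e2 i
            simpa [Finsupp.erase_ne hi] using this
      -- case TTF : m in x, y, not z
      · exfalso
        have hzm : z m = 0 := Finsupp.notMem_support_iff.1 hz
        have hcx := hunf x hx hsubx
        have hcy := hunf y hy hsuby
        rw [hcx, hcy] at hxy
        obtain ⟨-, hv1⟩ := List.append_inj' hxy rfl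
        have hv1' : x m = y m := he (List.singleton_injective hv1)
        rw [hzm, hv1', add_zero] at hvals
        exact Finsupp.mem_support_iff.1 hx (hv1'.trans (left_eq_add.1 hvals))
      -- case TFT : m in x, z, not y
      · exfalso
        have hym : y m = 0 := Finsupp.notMem_support_iff.1 hy
        have hcx := hunf x hx hsubx
        have hcz := hunf z hz hsubz
        have hxz := hxy.trans hyz
        rw [hcx, hcz] at hxz
        obtain ⟨-, hv1⟩ := List.append_inj' hxz rfl
        have hv1' : x m = z m := he (List.singleton_injective hv1)
        have h0 : x m + x m = 0 := by
          rw [hv1']; simpa [hym, hv1'] using hvals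
        exact Finsupp.mem_support_iff.1 hx (h2 _ h0)
      -- case TFF : m in x only
      · exfalso
        have hym : y m = 0 := Finsupp.notMem_support_iff.1 hy
        have hzm : z m = 0 := Finsupp.notMem_support_iff.1 hz
        rw [hym, hzm] at hvals
        simp only [add_zero] at hvals
        exact Finsupp.mem_support_iff.1 hx (by simpa using hvals)
      -- case FTT : m in y, z, not x
      · exfalso
        have hxm : x m = 0 := Finsupp.notMem_support_iff.1 hx
        have hcy := hunf y hy hsuby
        have hcz := hunf z hz hsubz
        rw [hcy, hcz] at hyz
        obtain ⟨-, hv1⟩ := List.append_inj' hyz rfl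
        have hv1' : y m = z m := he (List.singleton_injective hv1)
        rw [hxm, hv1', zero_add] at hvals
        exact Finsupp.mem_support_iff.1 hz (left_eq_add.1 hvals)
      -- case FTF : m in y only
      · exfalso
        have hxm : x m = 0 := Finsupp.notMem_support_iff.1 hx
        have hzm : z m = 0 := Finsupp.notMem_support_iff.1 hz
        rw [hxm, hzm] at hvals
        simp only [add_zero] at hvals
        exact Finsupp.mem_support_iff.1 hy (h2 _ hvals.symm)
      -- case FFT : m in z only
      · exfalso
        have hxm : x m = 0 := Finsupp.notMem_support_iff.1 hx
        have hym : y m = 0 := Finsupp.notMem_support_iff.1 hy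
        rw [hxm, hym] at hvals
        simp only [zero_add, add_zero] at hvals
        exact Finsupp.mem_support_iff.1 hz hvals
      -- case FFF : impossible
      · exfalso
        rcases Finset.mem_union.1 hmU with h | h
        · rcases Finset.mem_union.1 h with h' | h'
          · exact hx h'
          · exact hy h'
        · exact hz h

end CederKey

section Assemble

theorem isGood_cederList {I A : Type*} [LinearOrder I] [AddCommGroup A]
    (e : A → ℕ) (he : Function.Injective e) (h2 : ∀ u : A, u + u = 0 → u = 0) :
    IsGoodColoring (cederList (I := I) e) := by
  intro a b hb h1 hsec
  have heq : a + (a + 2 • b) = (a + b) + (a + b) := by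
    rw [two_nsmul]; abel
  obtain ⟨e1, -⟩ := cederList_key e he h2 _ a (a + b) (a + 2 • b) le_rfl heq
    h1.symm (h1.trans hsec.symm)
  exact hb (by simpa using e1.symm)

theorem exists_good_finsupp (I A : Type*) [AddCommGroup A] [Countable A]
    (h2 : ∀ u : A, u + u = 0 → u = 0) : ∃ c : (I →₀ A) → ℕ, IsGoodColoring c := by
  letI : LinearOrder I := IsWellOrder.linearOrder WellOrderingRel
  obtain ⟨e, he⟩ := Countable.exists_injective_nat A
  exact (isGood_cederList e he h2).to_nat

theorem exists_good_of_module (K V : Type*) [DivisionRing K] [Countable K] [AddCommGroup V]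
    [Module K V] (h2 : ∀ u : K, u + u = 0 → u = 0) : ∃ c : V → ℕ, IsGoodColoring c := by
  obtain ⟨c, hc⟩ := exists_good_finsupp (Module.Basis.ofVectorSpaceIndex K V) K h2
  have b := Module.Basis.ofVectorSpace K V
  exact ⟨fun v => c (b.repr v), hc.comp_addMonoidHom b.repr.toLinearMap.toAddMonoidHom
    b.repr.injective⟩

theorem exists_good_of_torsionFree (M : Type*) [AddCommGroup M]
    (htf : ∀ g : M, g ≠ 0 → ¬IsOfFinAddOrder g) : ∃ c : M → ℕ, IsGoodColoring c := by
  classical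
  have h2K : ∀ u : FractionRing ℤ, u + u = 0 → u = 0 := by
    intro u hu
    have h := congrArg (FractionRing.algEquiv ℤ ℚ) hu
    rw [map_add, map_zero] at h
    have h0 : (FractionRing.algEquiv ℤ ℚ) u = 0 := by linarith
    exact (FractionRing.algEquiv ℤ ℚ).injective (by rw [h0, map_zero])
  haveI : Countable (FractionRing ℤ) :=
    Countable.of_equiv ℚ (FractionRing.algEquiv ℤ ℚ).toEquiv.symm
  obtain ⟨c, hc⟩ := exists_good_of_module (FractionRing ℤ)
    (LocalizedModule (nonZeroDivisors ℤ) M) h2K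
  have hinj : Function.Injective (LocalizedModule.mkLinearMap (nonZeroDivisors ℤ) M) := by
    intro u v huv
    obtain ⟨s, hs⟩ := LocalizedModule.mk_eq.1 huv
    simp only [one_smul] at hs
    by_contra hne
    have hd : u - v ≠ 0 := sub_ne_zero.2 hne
    refine htf _ hd ?_
    have hz : (s : ℤ) • (u - v) = 0 := by
      rw [smul_sub]
      rw [show ((s : ℤ) • u = (s : ℤ) • v) from hs]
      rw [sub_self]
    refine isOfFinAddOrder_iff_nsmul_eq_zero.2 ⟨(s : ℤ).natAbs, ?_, ?_⟩
    · have := nonZeroDivisors.coe_ne_zero s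
      omega
    · rcases Int.natAbs_eq (s : ℤ) with h | h
      · rw [← natCast_zsmul, ← h, hz]
      · rw [← natCast_zsmul, ← neg_neg (((s:ℤ).natAbs : ℤ)), ← h, neg_smul, hz, neg_zero]
  set f : M →+ LocalizedModule (nonZeroDivisors ℤ) M :=
    AddMonoidHom.mk' (fun x => LocalizedModule.mkLinearMap (nonZeroDivisors ℤ) M x)
      (fun x y => by rw [map_add]) with hf
  exact ⟨fun x => c (f x), hc.comp_addMonoidHom f (fun u v h => hinj h)⟩

end Assemble

section Torsion

variable (T : Type*) [AddCommGroup T]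

/-- Remainder of `x` modulo a choice of coset representatives of `H`. -/
noncomputable def cosetRem (H : AddSubgroup T) (x : T) : H :=
  ⟨x - ((x : T ⧸ H)).out, by
    rw [sub_eq_neg_add]
    exact QuotientAddGroup.eq.1 (QuotientAddGroup.out_eq' _)⟩

theorem cosetRem_add_mem (H : AddSubgroup T) (x t : T) (ht : t ∈ H) :
    cosetRem T H (x + t) = cosetRem T H x + ⟨t, ht⟩ := by
  have hmk : ((x + t : T) : T ⧸ H) = (x : T ⧸ H) := by
    rw [QuotientAddGroup.mk_add]
    rw [(QuotientAddGroup.eq_zero_iff t).2 ht]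
    rw [add_zero]
  apply Subtype.ext
  simp only [cosetRem, AddSubgroup.coe_add]
  rw [hmk]
  abel

def socle (q : ℕ) : AddSubgroup T where
  carrier := {t | q • t = 0}
  zero_mem' := by simp
  add_mem' := by
    intro a b ha hb
    simp only [Set.mem_setOf_eq, smul_add] at *
    rw [ha, hb, add_zero]
  neg_mem' := by
    intro a ha
    simp only [Set.mem_setOf_eq, smul_neg] at *
    rw [ha, neg_zero]

theorem mem_socle {q : ℕ} {t : T} : t ∈ socle T q ↔ q • t = 0 := Iff.rfl

noncomputable def torsColor (D : ∀ q : ℕ, socle T q → ℕ) (x : T) : ℕ × List (List ℕ) :=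
  (addOrderOf x, (List.range (addOrderOf x + 1)).map fun m =>
    (List.range (addOrderOf x + 1)).map fun q => D q (cosetRem T (socle T q) (m • x)))

theorem range_map_congr {α : Type*} {k : ℕ} {f g : ℕ → α}
    (h : (List.range k).map f = (List.range k).map g) {i : ℕ} (hi : i < k) : f i = g i := by
  have h1 : ((List.range k).map f)[i]? = ((List.range k).map g)[i]? := by rw [h]
  rw [List.getElem?_map, List.getElem?_map, List.getElem?_range hi] at h1
  simpa using h1

theorem exists_good_of_torsion (ht : ∀ x : T, IsOfFinAddOrder x)
    (h2 : ∀ x : T, x + x = 0 → x = 0) : ∃ c : T → ℕ, IsGoodColoring c := by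
  classical
  have hDex : ∀ q : ℕ, ∃ d : socle T q → ℕ, q.Prime → IsGoodColoring d := by
    intro q
    by_cases hq : q.Prime
    · rcases eq_or_ne q 2 with rfl | hq2
      · refine ⟨fun _ => 0, fun _ => ?_⟩
        intro a b hb _ _
        apply hb
        apply Subtype.ext
        have hb2 : (b : T) + (b : T) = 0 := by
          have h := b.2
          rw [mem_socle, two_nsmul] at h
          exact h
        simp only [ZeroMemClass.coe_zero]
        exact h2 _ hb2
      · haveI : Fact q.Prime := ⟨hq⟩
        letI : Module (ZMod q) (socle T q) := AddCommGroup.zmodModule (by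
          intro x
          apply Subtype.ext
          have h := x.2
          rw [mem_socle] at h
          simpa using h)
        have h2K : ∀ u : ZMod q, u + u = 0 → u = 0 := by
          intro u hu
          have h2q : (2 : ZMod q) ≠ 0 := by
            intro h0
            have := (ZMod.natCast_eq_zero_iff 2 q).1 (by exact_mod_cast h0)
            rcases (Nat.Prime.eq_one_or_self_of_dvd Nat.prime_two q this) with h | h
            · exact hq.ne_one h
            · exact hq2 h
          have hmul : (2 : ZMod q) * u = 0 := by rw [two_mul]; exact hu
          rcases mul_eq_zero.1 hmul with h | h
          · exact absurd h h2q
          · exact h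
        obtain ⟨c, hc⟩ := exists_good_of_module (ZMod q) (socle T q) h2K
        exact ⟨c, fun _ => hc⟩
    · exact ⟨fun _ => 0, fun hp => absurd hp hq⟩
  choose D hD using hDex
  have hgood : IsGoodColoring (torsColor T D) := by
    intro a b hb h1 h2'
    simp only [torsColor, Prod.mk.injEq] at h1 h2'
    obtain ⟨hfst1, hsnd1⟩ := h1
    obtain ⟨hfst2, hsnd2⟩ := h2'
    set N := addOrderOf a with hN
    rw [hfst1] at hsnd1
    rw [hfst2] at hsnd2
    have hNpos : 0 < N := (ht a).addOrderOf_pos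
    have hNa : N • a = 0 := addOrderOf_nsmul_eq_zero a
    have hNab : N • (a + b) = 0 := by
      rw [← hfst1]; exact addOrderOf_nsmul_eq_zero _
    have hNb : N • b = 0 := by
      have hsm : N • (a + b) = N • a + N • b := smul_add N a b
      rw [hNab, hNa, zero_add] at hsm
      exact hsm.symm
    set n := addOrderOf b with hn
    have hnN : n ∣ N := addOrderOf_dvd_of_nsmul_eq_zero hNb
    have hn1 : n ≠ 1 := fun h => hb (AddMonoid.addOrderOf_eq_one_iff.1 h)
    have hnpos : 0 < n := (ht b).addOrderOf_pos
    set q := n.minFac with hq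
    have hqp : q.Prime := Nat.minFac_prime hn1
    have hqd : q ∣ n := Nat.minFac_dvd n
    set m := n / q with hm
    have hmq : m * q = n := Nat.div_mul_cancel hqd
    have hmem : m • b ∈ socle T q := by
      rw [mem_socle, smul_smul, mul_comm, hmq, hn]
      exact addOrderOf_nsmul_eq_zero b
    have hmlt : m < n := Nat.div_lt_self hnpos hqp.one_lt
    have hmpos : 0 < m := Nat.div_pos (Nat.minFac_le hnpos) hqp.pos
    have hmbne : m • b ≠ 0 := by
      intro h0
      have hdvd : n ∣ m := addOrderOf_dvd_of_nsmul_eq_zero h0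
      have := Nat.le_of_dvd hmpos hdvd
      omega
    have hnleN : n ≤ N := Nat.le_of_dvd hNpos hnN
    have hmlt' : m < N + 1 := by omega
    have hqlt : q < N + 1 := by
      have := Nat.le_of_dvd hnpos hqd
      omega
    have hrow1 := range_map_congr hsnd1 hmlt'
    have hrow2 := range_map_congr hsnd2 hmlt'
    have hval1 := range_map_congr hrow1 hqlt
    have hval2 := range_map_congr hrow2 hqlt
    -- rewrite the smuls
    have hsp1 : m • (a + b) = m • a + m • b := smul_add m a b
    have hsp2 : m • (a + 2 • b) = m • a + 2 • (m • b) := by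
      rw [smul_add, smul_smul, smul_smul, mul_comm]
    have hmem2 : 2 • (m • b) ∈ socle T q := AddSubgroup.nsmul_mem _ hmem 2
    rw [hsp1, cosetRem_add_mem T (socle T q) (m • a) (m • b) hmem] at hval1
    rw [hsp2, cosetRem_add_mem T (socle T q) (m • a) (2 • (m • b)) hmem2] at hval2
    have hcast : (⟨2 • (m • b), hmem2⟩ : socle T q) = 2 • (⟨m • b, hmem⟩ : socle T q) := by
      apply Subtype.ext
      simp
    rw [hcast] at hval2
    exact hD q hqp (cosetRem T (socle T q) (m • a)) ⟨m • b, hmem⟩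
      (fun h0 => hmbne (by simpa using congrArg Subtype.val h0)) hval1 hval2
  exact hgood.to_nat

end Torsion

theorem exists_good_coloring (G : Type*) [AddCommGroup G]
    (h2 : ∀ x : G, x + x = 0 → x = 0) : ∃ c : G → ℕ, IsGoodColoring c := by
  classical
  set T := AddCommGroup.torsion G with hT
  obtain ⟨c1, hc1⟩ := exists_good_of_torsionFree (G ⧸ T)
    (fun g hg => not_isOfFinAddOrder_of_isAddTorsionFree hg)
  have htT : ∀ x : ↥T, IsOfFinAddOrder x := by
    intro x
    have hx : IsOfFinAddOrder (x : G) := x.2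
    obtain ⟨n, hnpos, hn⟩ := isOfFinAddOrder_iff_nsmul_eq_zero.1 hx
    exact isOfFinAddOrder_iff_nsmul_eq_zero.2 ⟨n, hnpos, Subtype.ext (by simpa using hn)⟩
  have h2T : ∀ x : ↥T, x + x = 0 → x = 0 := by
    intro x hx
    apply Subtype.ext
    apply h2
    simpa using congrArg Subtype.val hx
  obtain ⟨c2, hc2⟩ := exists_good_of_torsion ↥T htT h2T
  have hgood : IsGoodColoring (fun x : G => (c1 (x : G ⧸ T), c2 (cosetRem G T x))) := by
    intro a b hb h1 h2'
    simp only [Prod.mk.injEq] at h1 h2'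
    by_cases hbT : b ∈ T
    · -- use the torsion coloring
      have e1 : cosetRem G T (a + b) = cosetRem G T a + ⟨b, hbT⟩ :=
        cosetRem_add_mem G T a b hbT
      have hbT2 : 2 • b ∈ T := AddSubgroup.nsmul_mem _ hbT 2
      have e2 : cosetRem G T (a + 2 • b) = cosetRem G T a + 2 • (⟨b, hbT⟩ : ↥T) := by
        rw [cosetRem_add_mem G T a (2 • b) hbT2]
        have hcast : (⟨2 • b, hbT2⟩ : ↥T) = 2 • (⟨b, hbT⟩ : ↥T) := Subtype.ext (by simp)
        rw [hcast]
      refine hc2 (cosetRem G T a) ⟨b, hbT⟩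
        (fun h0 => hb (by simpa using congrArg Subtype.val h0)) ?_ ?_
      · rw [← e1]; exact h1.2
      · rw [← e2]; exact h2'.2
    · -- use the quotient coloring
      have hbq : ((b : G) : G ⧸ T) ≠ 0 := fun h0 => hbT ((QuotientAddGroup.eq_zero_iff b).1 h0)
      refine hc1 ((a : G) : G ⧸ T) ((b : G) : G ⧸ T) hbq ?_ ?_
      · rw [← QuotientAddGroup.mk_add]; exact h1.1
      · rw [← QuotientAddGroup.mk_nsmul, ← QuotientAddGroup.mk_add]; exact h2'.1
  exact hgood.to_nat

/-- If `G` is an infinite abelian group with no elements of order `2`,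
then there is a colouring `c : G → ℕ` such that no nontrivial `3`-term arithmetic
progression `{a, a+b, a+2b}` (with `b ≠ 0`) is monochromatic. -/
theorem stmt_13 (G : Type*) [AddCommGroup G] [Infinite G]
    (h2 : ∀ x : G, x + x = 0 → x = 0) :
    ∃ c : G → ℕ, ∀ a b : G, b ≠ 0 →
      ¬ ∃ k, ∀ s ∈ ({a, a + b, a + 2 • b} : Set G), c s = k := by
  obtain ⟨c, hc⟩ := exists_good_coloring G h2
  refine ⟨c, ?_⟩
  rintro a b hb ⟨k, hk⟩
  have h0 := hk a (by simp)
  have hA := hk (a + b) (by simp)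
  have hB := hk (a + 2 • b) (by simp)
  exact hc a b hb (hA.trans h0.symm) (hB.trans h0.symm)
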